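/- Let X be a compact metric space, f : X → X a homeomorphism, and q a fixed point of f with an open neighborhood b such that cl(b) ⊆ f(b) and ⋂_{k≥0} f^{-k}(b) = {q}. Then ⋃_{k≥0} f^k(b) = { x ∈ X : α_f(x) = {q} }. -/

import Mathlib

open Filter Topology Set

/-- The ω-limit set of a point `x` under a map `f`: all `y` such that
`f^[k j] x → y` for some sequence `k j → +∞`.  The α-limit set of `x` under a
homeomorphism `f` is the ω-limit set of `x` under `f⁻¹`. -/
def omegaSet {X : Type*} [TopologicalSpace X] (f : X → X) (x : X) : Set X :=
  { y | ∃ k : ℕ → ℕ, Tendsto k atTop atTop ∧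
      Tendsto (fun j => f^[k j] x) atTop (𝓝 y) }

/-- If `q` is a repelling fixed point of a homeomorphism `f` of a compact
metric space, with trapping ball `b`, then the basin `⋃_{k≥0} f^k(b)` equals
the set of points whose α-limit set is exactly `{q}`. -/
theorem basin_of_source_eq_points_with_alpha_q
    {X : Type*} [MetricSpace X] [CompactSpace X] (f : X ≃ₜ X)
    (q : X) (hfix : f q = q)
    (b : Set X) (hbopen : IsOpen b) (hqb : q ∈ b)
    (hexp : closure b ⊆ ⇑f '' b)
    (hbasin : (⋂ k : ℕ, (⇑f)^[k] ⁻¹' b) = {q}) :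
    (⋃ k : ℕ, (⇑f)^[k] '' b) = { x | omegaSet (⇑f.symm) x = {q} } := by
  set g : X → X := ⇑f.symm with hgdef
  have hli : ∀ k, Function.LeftInverse (g^[k]) ((⇑f)^[k]) :=
    fun k => Function.LeftInverse.iterate f.symm_apply_apply k
  have hri : ∀ k, Function.RightInverse (g^[k]) ((⇑f)^[k]) :=
    fun k => Function.LeftInverse.iterate f.apply_symm_apply k
  have hgq : g q = q := by
    have := congrArg f.symm hfix
    simpa using this.symm
  have hgb : g '' closure b ⊆ b := by
    intro y ⟨z, hz, hzy⟩
    obtain ⟨w, hw, hwz⟩ := hexp hz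
    rw [← hzy, ← hwz]
    show f.symm (f w) ∈ b
    rw [f.symm_apply_apply]
    exact hw
  set S : ℕ → Set X := fun k => g^[k] '' closure b with hS
  have hgcont : Continuous g := f.symm.continuous
  have hScompact : ∀ k, IsCompact (S k) := fun k =>
    isClosed_closure.isCompact.image (hgcont.iterate k)
  have hSsub : ∀ k, S (k + 1) ⊆ g^[k] '' b := by
    intro k
    rw [hS]
    simp only [Function.iterate_succ, Set.image_comp]
    exact Set.image_mono hgb
  have hstep : ∀ k, S (k + 1) ⊆ S k := fun k =>
    (hSsub k).trans (Set.image_mono subset_closure)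
  have hSanti : Antitone S := antitone_nat_of_succ_le hstep
  have himg : ∀ k, g^[k] '' b = (⇑f)^[k] ⁻¹' b := by
    intro k
    ext y
    constructor
    · rintro ⟨z, hz, rfl⟩
      simpa [hri k z] using hz
    · intro hy
      exact ⟨(⇑f)^[k] y, hy, hli k y⟩
  have hSinter : (⋂ k, S k) = {q} := by
    apply Set.Subset.antisymm
    · intro y hy
      rw [← hbasin]
      simp only [Set.mem_iInter]
      intro k
      have h1 : y ∈ g^[k] '' b := hSsub k (Set.mem_iInter.mp hy (k + 1))
      rwa [himg k] at h1
    · intro y hy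
      rw [Set.mem_singleton_iff] at hy
      refine Set.mem_iInter.mpr fun k => ⟨q, subset_closure hqb, ?_⟩
      rw [hy]
      exact Function.iterate_fixed hgq k
  have hshrink : ∀ U : Set X, IsOpen U → q ∈ U → ∃ N, S N ⊆ U := by
    intro U hU hqU
    by_contra h
    push_neg at h
    have hne : ∀ N, (S N ∩ Uᶜ).Nonempty := by
      intro N
      obtain ⟨y, hy1, hy2⟩ := Set.not_subset.mp (h N)
      exact ⟨y, hy1, hy2⟩
    have hdir : Directed (· ⊇ ·) (fun N => S N ∩ Uᶜ) := by
      intro i j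
      exact ⟨max i j, Set.inter_subset_inter_left _ (hSanti (le_max_left i j)),
        Set.inter_subset_inter_left _ (hSanti (le_max_right i j))⟩
    obtain ⟨y, hy⟩ := IsCompact.nonempty_iInter_of_directed_nonempty_isCompact_isClosed
      (fun N => S N ∩ Uᶜ) hdir hne
      (fun N => (hScompact N).inter_right hU.isClosed_compl)
      (fun N => (hScompact N).isClosed.inter hU.isClosed_compl)
    have hyS : y ∈ ⋂ k, S k := Set.mem_iInter.mpr fun k => (Set.mem_iInter.mp hy k).1
    have hyq : y = q := by rwa [hSinter] at hyS
    exact (Set.mem_iInter.mp hy 0).2 (hyq ▸ hqU)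
  have hconv : ∀ (x : X) (k : ℕ), g^[k] x ∈ b →
      Tendsto (fun n => g^[n] x) atTop (𝓝 q) := by
    intro x k hk
    rw [tendsto_nhds]
    intro U hU hqU
    obtain ⟨N, hN⟩ := hshrink U hU hqU
    refine Filter.mem_of_superset (Filter.Ici_mem_atTop (k + N)) ?_
    intro n hn
    have hn' : k + N ≤ n := hn
    have heq : g^[n] x = g^[n - k] (g^[k] x) := by
      rw [← Function.iterate_add_apply]
      congr 1
      omega
    have hmem : g^[n] x ∈ S (n - k) :=
      heq ▸ Set.mem_image_of_mem _ (subset_closure hk)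
    exact hN (hSanti (by omega : N ≤ n - k) hmem)
  ext x
  simp only [Set.mem_iUnion, Set.mem_setOf_eq]
  constructor
  · rintro ⟨k, z, hz, rfl⟩
    have hk : g^[k] ((⇑f)^[k] z) ∈ b := by rw [hli k z]; exact hz
    have ht := hconv _ k hk
    ext y
    simp only [Set.mem_singleton_iff]
    constructor
    · rintro ⟨ks, hks, hys⟩
      exact tendsto_nhds_unique hys (ht.comp hks)
    · rintro rfl
      exact ⟨id, tendsto_id, ht⟩
  · intro hx
    have hq : q ∈ omegaSet g x := by rw [hx]; rfl
    obtain ⟨ks, hks, hys⟩ := hq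
    have hev : ∀ᶠ j in atTop, g^[ks j] x ∈ b :=
      hys.eventually_mem (hbopen.mem_nhds hqb)
    obtain ⟨j, hj⟩ := hev.exists
    exact ⟨ks j, g^[ks j] x, hj, hri (ks j) x⟩
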